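/- Let X = (X, T, μ_X), Y = (Y, S, μ_Y) and Z = (Z, R, μ_Z) be G systems and suppose Y is a factor of X, i.e., there exists a factor map π : X → Y. If X and Z are quasi-disjoint, then Y and Z are quasi-disjoint. -/

import Mathlib

open MeasureTheory Filter Topology

section Defs

variable {G : Type*} [Group G] {X Y : Type*} [MeasurableSpace X] [MeasurableSpace Y]

/-- A joining of two `G` systems: a probability measure on the product which is invariant
under the diagonal action and has the two given measures as marginals. -/
def IsJoining (T : G → X → X) (S : G → Y → Y) (μX : Measure X) (μY : Measure Y)
    (ν : Measure (X × Y)) : Prop :=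
  IsProbabilityMeasure ν ∧
    (∀ g : G, MeasurePreserving (fun p : X × Y => (T g p.1, S g p.2)) ν ν) ∧
    ν.map Prod.fst = μX ∧ ν.map Prod.snd = μY

/-- `f ∈ L²(X, μ)` is almost periodic if the orbit `{f ∘ T^g : g ∈ G}` has compact closure
in the norm topology of `L²(X, μ)`. -/
def AlmostPeriodic (T : G → X → X) (μ : Measure X) (f : Lp ℂ 2 μ) : Prop :=
  IsCompact (closure {h : Lp ℂ 2 μ | ∃ g : G, (h : X → ℂ) =ᵐ[μ] fun x => f (T g x)})

/-- The joining `ν` projects to the product measure on the product of the Kronecker factors: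
almost periodic functions of the two systems are uncorrelated under `ν`. -/
def ProjectsToKroneckerProduct (T : G → X → X) (S : G → Y → Y) (μX : Measure X)
    (μY : Measure Y) (ν : Measure (X × Y)) : Prop :=
  ∀ (f : Lp ℂ 2 μX) (h : Lp ℂ 2 μY), AlmostPeriodic T μX f → AlmostPeriodic S μY h →
    ∫ p, f p.1 * h p.2 ∂ν = (∫ x, f x ∂μX) * (∫ y, h y ∂μY)

/-- Two `G` systems are quasi-disjoint if the only joining projecting to the product measure
on the product of the Kronecker factors is the product measure. -/
def QuasiDisjoint (T : G → X → X) (S : G → Y → Y) (μX : Measure X) (μY : Measure Y) : Prop :=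
  ∀ ν : Measure (X × Y), IsJoining T S μX μY ν →
    ProjectsToKroneckerProduct T S μX μY ν → ν = μX.prod μY

/-- Two `G` systems are disjoint if the product measure is their only joining. -/
def DisjointSystems (T : G → X → X) (S : G → Y → Y) (μX : Measure X) (μY : Measure Y) : Prop :=
  ∀ ν : Measure (X × Y), IsJoining T S μX μY ν → ν = μX.prod μY

/-- Two `G` systems are Kronecker disjoint if every joining projects to the product measure
on the product of the Kronecker factors. -/
def KroneckerDisjoint (T : G → X → X) (S : G → Y → Y) (μX : Measure X) (μY : Measure Y) :
    Prop :=
  ∀ ν : Measure (X × Y), IsJoining T S μX μY ν → ProjectsToKroneckerProduct T S μX μY ν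

/-- A separating sieve for the system `(X, T, μ)`. -/
def HasSeparatingSieve (T : G → X → X) (μ : Measure X) : Prop :=
  ∃ A : ℕ → Set X, (∀ n, MeasurableSet (A n)) ∧ (∀ n, 0 < μ (A n)) ∧
    Tendsto (fun n => μ (A n)) atTop (𝓝 0) ∧
    ∃ X' : Set X, μ X'ᶜ = 0 ∧
      ∀ x ∈ X', ∀ x' ∈ X', (∀ n : ℕ, ∃ g : G, T g x ∈ A n ∧ T g x' ∈ A n) → x = x'

/-- A factor map of `G` systems: a measurable, almost everywhere `G`-equivariant map
pushing `μX` forward to `μY`. -/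
def IsFactorMap (T : G → X → X) (S : G → Y → Y) (μX : Measure X) (μY : Measure Y)
    (π : X → Y) : Prop :=
  Measurable π ∧ μX.map π = μY ∧ ∀ g : G, ∀ᵐ x ∂μX, π (T g x) = S g (π x)

/-- Ergodicity of a `G` system: every invariant Borel set is null or conull. -/
def ErgodicSystem (T : G → X → X) (μ : Measure X) : Prop :=
  ∀ A : Set X, MeasurableSet A → (∀ g : G, T g ⁻¹' A = A) → μ A = 0 ∨ μ A = 1

end Defs


section QDAuxSection

open Set ProbabilityTheory ComplexConjugate
open scoped ENNReal NNReal

namespace QDAux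

variable {α β γ : Type*} [MeasurableSpace α] [MeasurableSpace β] [MeasurableSpace γ]


variable {α β γ : Type*} [MeasurableSpace α] [MeasurableSpace β] [MeasurableSpace γ]

lemma measure_prod_ext {μ ν : Measure (α × β)} [IsFiniteMeasure μ] [IsFiniteMeasure ν]
    (h : ∀ A B, MeasurableSet A → MeasurableSet B → μ (A ×ˢ B) = ν (A ×ˢ B)) : μ = ν := by
  refine MeasureTheory.ext_of_generate_finite _ generateFrom_prod.symm isPiSystem_prod ?_ ?_
  · rintro s ⟨A, hA, B, hB, rfl⟩
    exact h A B hA hB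
  · simpa [Set.univ_prod_univ] using h univ univ MeasurableSet.univ MeasurableSet.univ

lemma ae_comp {μ : Measure α} {ν : Measure β} {f : α → β} (hf : MeasurePreserving f μ ν)
    {p : β → Prop} (h : ∀ᵐ y ∂ν, p y) : ∀ᵐ x ∂μ, p (f x) := by
  rw [← hf.map_eq] at h
  exact ae_of_ae_map hf.measurable.aemeasurable h

lemma aeeq_comp {E : Type*} {μ : Measure α} {ν : Measure β} {f : α → β}
    (hf : MeasurePreserving f μ ν) {u v : β → E} (h : u =ᵐ[ν] v) :
    (fun x => u (f x)) =ᵐ[μ] fun x => v (f x) :=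
  ae_comp hf h

lemma comp_comp {μ : Measure α} {ν : Measure β} {ρ : Measure γ} (f : α → β)
    (hf : MeasurePreserving f μ ν) (g : β → γ) (hg : MeasurePreserving g ν ρ) (u : Lp ℂ 2 ρ) :
    Lp.compMeasurePreserving f hf (Lp.compMeasurePreserving g hg u)
      = Lp.compMeasurePreserving (g ∘ f) (hg.comp hf) u := by
  refine Lp.ext ?_
  have h1 := Lp.coeFn_compMeasurePreserving (Lp.compMeasurePreserving g hg u) hf
  have h2 : (fun x => (Lp.compMeasurePreserving g hg u : β → ℂ) (f x)) =ᵐ[μ]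
      fun x => (u : γ → ℂ) (g (f x)) := aeeq_comp hf (Lp.coeFn_compMeasurePreserving u hg)
  exact h1.trans (h2.trans (Lp.coeFn_compMeasurePreserving u (hg.comp hf)).symm)

lemma comp_id {μ : Measure α} {e : α → α} (he : MeasurePreserving e μ μ) (hid : ∀ x, e x = x)
    (u : Lp ℂ 2 μ) : Lp.compMeasurePreserving e he u = u := by
  refine Lp.ext ((Lp.coeFn_compMeasurePreserving u he).trans ?_)
  exact Eventually.of_forall fun x => by simp only [Function.comp_apply, hid x]

/-- Pointwise complex conjugation on `L²`. -/
noncomputable def conjLp {μ : Measure α} (u : Lp ℂ 2 μ) : Lp ℂ 2 μ :=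
  (Complex.isometry_conj.lipschitz).compLp (map_zero (starRingEnd ℂ)) u

lemma coeFn_conjLp {μ : Measure α} (u : Lp ℂ 2 μ) :
    conjLp u =ᵐ[μ] fun x => conj (u x) :=
  LipschitzWith.coeFn_compLp _ _ _

lemma conjLp_conjLp {μ : Measure α} (u : Lp ℂ 2 μ) : conjLp (conjLp u) = u := by
  refine Lp.ext ((coeFn_conjLp _).trans ?_)
  filter_upwards [coeFn_conjLp u] with x hx
  rw [hx]
  simp

lemma continuous_conjLp {μ : Measure α} : Continuous (conjLp (μ := μ)) :=
  (LipschitzWith.lipschitzWith_compLp Complex.isometry_conj.lipschitz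
    (map_zero (starRingEnd ℂ))).continuous

lemma conjLp_comp {μ : Measure α} {ν : Measure β} (f : α → β) (hf : MeasurePreserving f μ ν)
    (u : Lp ℂ 2 ν) :
    conjLp (Lp.compMeasurePreserving f hf u) = Lp.compMeasurePreserving f hf (conjLp u) := by
  refine Lp.ext ?_
  have h1 := (coeFn_conjLp (Lp.compMeasurePreserving f hf u))
  have h2 : (fun x => conj ((Lp.compMeasurePreserving f hf u : α → ℂ) x)) =ᵐ[μ]
      fun x => conj ((u : β → ℂ) (f x)) := by
    filter_upwards [Lp.coeFn_compMeasurePreserving u hf] with x hx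
    rw [hx]; rfl
  have h3 : (fun x => conj ((u : β → ℂ) (f x))) =ᵐ[μ]
      fun x => (conjLp u : β → ℂ) (f x) := (aeeq_comp hf (coeFn_conjLp u)).symm
  exact (h1.trans (h2.trans h3)).trans (Lp.coeFn_compMeasurePreserving (conjLp u) hf).symm

lemma isCompact_closure_range_of_comm {A B : Type*} [TopologicalSpace A] [TopologicalSpace B]
    [T2Space B] {G : Type*} {u : G → A} {v : G → B} {Q : A → B} (hQ : Continuous Q)
    (hcomm : ∀ g, v g = Q (u g)) (hK : IsCompact (closure (Set.range u))) :
    IsCompact (closure (Set.range v)) := by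
  have h1 : Set.range v ⊆ Q '' closure (Set.range u) := by
    rintro _ ⟨g, rfl⟩
    exact ⟨u g, subset_closure ⟨g, rfl⟩, (hcomm g).symm⟩
  exact IsCompact.of_isClosed_subset (hK.image hQ) isClosed_closure
    (closure_minimal h1 (hK.image hQ).isClosed)

lemma memLp_conj {μ : Measure α} {u : α → ℂ} (hu : MemLp u 2 μ) :
    MemLp (fun x => conj (u x)) 2 μ := by
  refine ⟨Complex.continuous_conj.comp_aestronglyMeasurable hu.1, ?_⟩
  rw [show eLpNorm (fun x => conj (u x)) 2 μ = eLpNorm u 2 μ from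
    eLpNorm_congr_norm_ae (Eventually.of_forall fun x => by simp)]
  exact hu.2

lemma integrable_mul {μ : Measure α} {u v : α → ℂ} (hu : MemLp u 2 μ) (hv : MemLp v 2 μ) :
    Integrable (fun x => u x * v x) μ := by
  have hu' := memLp_conj hu
  have h := L2.integrable_inner (𝕜 := ℂ) (hu'.toLp _) (hv.toLp _)
  refine h.congr ?_
  filter_upwards [hu'.coeFn_toLp, hv.coeFn_toLp] with x h1 h2
  rw [RCLike.inner_apply, h1, h2]
  simp
  ring


lemma almostPeriodic_iff {G : Type*} [Group G] (T : G → α → α)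
    (μ : Measure α) (hTμ : ∀ g, MeasurePreserving (T g) μ μ) (f : Lp ℂ 2 μ) :
    AlmostPeriodic T μ f ↔
      IsCompact (closure (Set.range fun g => Lp.compMeasurePreserving (T g) (hTμ g) f)) := by
  have hset : {h : Lp ℂ 2 μ | ∃ g : G, (h : α → ℂ) =ᵐ[μ] fun x => f (T g x)}
      = Set.range fun g => Lp.compMeasurePreserving (T g) (hTμ g) f := by
    ext h
    constructor
    · rintro ⟨g, hg⟩
      exact ⟨g, Lp.ext ((Lp.coeFn_compMeasurePreserving f (hTμ g)).trans hg.symm)⟩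
    · rintro ⟨g, rfl⟩
      exact ⟨g, Lp.coeFn_compMeasurePreserving f (hTμ g)⟩
  rw [AlmostPeriodic, hset]

lemma koop_inv {G : Type*} [Group G] {μ : Measure α} (T : G → α → α)
    (hT1 : ∀ x, T 1 x = x) (hTmul : ∀ g h x, T (g * h) x = T g (T h x))
    (hTμ : ∀ g, MeasurePreserving (T g) μ μ) (g : G) (u : Lp ℂ 2 μ) :
    Lp.compMeasurePreserving (T g) (hTμ g)
      (Lp.compMeasurePreserving (T g⁻¹) (hTμ g⁻¹) u) = u := by
  have h1 : g⁻¹ * g = 1 := by group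
  rw [comp_comp (T g) (hTμ g) (T g⁻¹) (hTμ g⁻¹) u]
  refine comp_id _ (fun x => ?_) u
  show T g⁻¹ (T g x) = x
  rw [← hTmul, h1, hT1]

lemma memLp_kernel_integral {μ : Measure β} [IsProbabilityMeasure μ] (κ : Kernel β γ)
    [IsMarkovKernel κ] {ξ : Measure γ} (h : Lp ℂ 2 ξ)
    (hmap : (μ ⊗ₘ κ).map Prod.snd = ξ) :
    MemLp (fun y => ∫ z, (h : γ → ℂ) z ∂κ y) 2 μ := by
  have hsm : StronglyMeasurable fun p : β × γ => (h : γ → ℂ) p.2 :=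
    (Lp.stronglyMeasurable h).comp_measurable measurable_snd
  have hmeas2 : Measurable fun z : γ => (‖(h : γ → ℂ) z‖₊ : ℝ≥0∞) ^ (2 : ℝ) :=
    ((Lp.stronglyMeasurable h).measurable.enorm).pow_const _
  have hint : ∫⁻ z, (‖(h : γ → ℂ) z‖₊ : ℝ≥0∞) ^ (2 : ℝ) ∂ξ < ∞ := by
    have h2 := Lp.eLpNorm_lt_top h
    rwa [eLpNorm_eq_lintegral_rpow_enorm_toReal two_ne_zero ENNReal.ofNat_ne_top,
      (show ((2 : ℝ≥0∞)).toReal = (2 : ℝ) by norm_num),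
      ENNReal.rpow_lt_top_iff_of_pos (by norm_num)] at h2
  have key1 : ∀ y : β, (‖∫ z, (h : γ → ℂ) z ∂κ y‖₊ : ℝ≥0∞) ^ (2 : ℝ)
      ≤ ∫⁻ z, (‖(h : γ → ℂ) z‖₊ : ℝ≥0∞) ^ (2 : ℝ) ∂κ y := by
    intro y
    have h1 : (‖∫ z, (h : γ → ℂ) z ∂κ y‖₊ : ℝ≥0∞) ≤ ∫⁻ z, (‖(h : γ → ℂ) z‖₊ : ℝ≥0∞) ∂κ y :=
      enorm_integral_le_lintegral_enorm _
    have h2 : ∫⁻ z, (‖(h : γ → ℂ) z‖₊ : ℝ≥0∞) ∂κ y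
        ≤ (∫⁻ z, (‖(h : γ → ℂ) z‖₊ : ℝ≥0∞) ^ (2 : ℝ) ∂κ y) ^ (1 / 2 : ℝ) := by
      have hcs := ENNReal.lintegral_mul_le_Lp_mul_Lq (κ y)
        Real.HolderConjugate.two_two
        (f := fun z => (‖(h : γ → ℂ) z‖₊ : ℝ≥0∞)) (g := fun _ => 1)
        ((Lp.stronglyMeasurable h).measurable.enorm).aemeasurable aemeasurable_const
      simpa [measure_univ] using hcs
    calc (‖∫ z, (h : γ → ℂ) z ∂κ y‖₊ : ℝ≥0∞) ^ (2 : ℝ)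
        ≤ ((∫⁻ z, (‖(h : γ → ℂ) z‖₊ : ℝ≥0∞) ^ (2 : ℝ) ∂κ y) ^ (1 / 2 : ℝ)) ^ (2 : ℝ) :=
          ENNReal.rpow_le_rpow (h1.trans h2) (by norm_num)
      _ = ∫⁻ z, (‖(h : γ → ℂ) z‖₊ : ℝ≥0∞) ^ (2 : ℝ) ∂κ y := by
          rw [← ENNReal.rpow_mul]; norm_num
  refine ⟨(StronglyMeasurable.integral_kernel_prod_right' hsm).aestronglyMeasurable, ?_⟩
  rw [eLpNorm_eq_lintegral_rpow_enorm_toReal two_ne_zero ENNReal.ofNat_ne_top,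
    (show ((2 : ℝ≥0∞)).toReal = (2 : ℝ) by norm_num)]
  refine ENNReal.rpow_lt_top_of_nonneg (by norm_num) (ne_of_lt ?_)
  calc ∫⁻ y, (‖∫ z, (h : γ → ℂ) z ∂κ y‖₊ : ℝ≥0∞) ^ (2 : ℝ) ∂μ
      ≤ ∫⁻ y, ∫⁻ z, (‖(h : γ → ℂ) z‖₊ : ℝ≥0∞) ^ (2 : ℝ) ∂κ y ∂μ := lintegral_mono key1
    _ = ∫⁻ p : β × γ, (‖(h : γ → ℂ) p.2‖₊ : ℝ≥0∞) ^ (2 : ℝ) ∂(μ ⊗ₘ κ) :=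
        (Measure.lintegral_compProd (hmeas2.comp measurable_snd)).symm
    _ = ∫⁻ z, (‖(h : γ → ℂ) z‖₊ : ℝ≥0∞) ^ (2 : ℝ) ∂ξ := by
        have h3 := lintegral_map (μ := μ ⊗ₘ κ) hmeas2
          (measurable_snd : Measurable (Prod.snd : β × γ → γ))
        rw [hmap] at h3
        exact h3.symm
    _ < ∞ := hint


lemma exists_Q {G X Y : Type*} [Group G] [MeasurableSpace X] [MeasurableSpace Y]
    {μX : Measure X} {μY : Measure Y} [IsProbabilityMeasure μX] [IsProbabilityMeasure μY]
    (T : G → X → X) (hT1 : ∀ x, T 1 x = x) (hTmul : ∀ g h x, T (g * h) x = T g (T h x))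
    (hTμ : ∀ g, MeasurePreserving (T g) μX μX)
    (S : G → Y → Y) (hS1 : ∀ y, S 1 y = y) (hSmul : ∀ g h y, S (g * h) y = S g (S h y))
    (hSμ : ∀ g, MeasurePreserving (S g) μY μY)
    (π : X → Y) (hmpπ : MeasurePreserving π μX μY)
    (hπeq : ∀ g : G, ∀ᵐ x ∂μX, π (T g x) = S g (π x)) :

    ∃ Q : Lp ℂ 2 μX → Lp ℂ 2 μY,
      (∀ f : Lp ℂ 2 μX, AlmostPeriodic T μX f → AlmostPeriodic S μY (Q f)) ∧
      (∀ (f : Lp ℂ 2 μX) (H : Lp ℂ 2 μY),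
        ∫ x, (f : X → ℂ) x * (H : Y → ℂ) (π x) ∂μX
          = ∫ y, (Q f : Y → ℂ) y * (H : Y → ℂ) y ∂μY) := by
  classical
  set Φ : Lp ℂ 2 μY →L[ℂ] Lp ℂ 2 μX :=
    (Lp.compMeasurePreservingₗᵢ ℂ π hmpπ).toContinuousLinearMap with hΦdef
  set Φt : Lp ℂ 2 μX →L[ℂ] Lp ℂ 2 μY := ContinuousLinearMap.adjoint Φ with hΦtdef
  have hΦapp : ∀ k : Lp ℂ 2 μY, Φ k = Lp.compMeasurePreserving π hmpπ k := fun k => rfl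
  have hinv : ∀ (g : G) (u : Lp ℂ 2 μX),
      Lp.compMeasurePreserving (T g) (hTμ g)
        (Lp.compMeasurePreserving (T g⁻¹) (hTμ g⁻¹) u) = u :=
    fun g u => koop_inv T hT1 hTmul hTμ g u
  have hinvS : ∀ (g : G) (k : Lp ℂ 2 μY),
      Lp.compMeasurePreserving (S g) (hSμ g)
        (Lp.compMeasurePreserving (S g⁻¹) (hSμ g⁻¹) k) = k :=
    fun g k => koop_inv S hS1 hSmul hSμ g k
  have hinner : ∀ (g : G) (u v : Lp ℂ 2 μX),
      (inner ℂ (Lp.compMeasurePreserving (T g) (hTμ g) u)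
        (Lp.compMeasurePreserving (T g) (hTμ g) v) : ℂ) = inner ℂ u v :=
    fun g u v => (Lp.compMeasurePreservingₗᵢ ℂ (T g) (hTμ g)).inner_map_map u v
  have hinnerS : ∀ (g : G) (u v : Lp ℂ 2 μY),
      (inner ℂ (Lp.compMeasurePreserving (S g) (hSμ g) u)
        (Lp.compMeasurePreserving (S g) (hSμ g) v) : ℂ) = inner ℂ u v :=
    fun g u v => (Lp.compMeasurePreservingₗᵢ ℂ (S g) (hSμ g)).inner_map_map u v
  have hΦV : ∀ (g : G) (k : Lp ℂ 2 μY),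
      Φ (Lp.compMeasurePreserving (S g) (hSμ g) k)
        = Lp.compMeasurePreserving (T g) (hTμ g) (Φ k) := by
    intro g k
    rw [hΦapp, hΦapp]
    refine Lp.ext ?_
    have h1 := Lp.coeFn_compMeasurePreserving
      (Lp.compMeasurePreserving (S g) (hSμ g) k) hmpπ
    have h2 : (fun x => (Lp.compMeasurePreserving (S g) (hSμ g) k : Y → ℂ) (π x)) =ᵐ[μX]
        fun x => (k : Y → ℂ) (S g (π x)) :=
      aeeq_comp hmpπ (Lp.coeFn_compMeasurePreserving k (hSμ g))
    have h3 : (fun x => (k : Y → ℂ) (S g (π x))) =ᵐ[μX]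
        fun x => (k : Y → ℂ) (π (T g x)) := by
      filter_upwards [hπeq g] with x hx
      rw [hx]
    have h4 : (fun x => (k : Y → ℂ) (π (T g x))) =ᵐ[μX]
        fun x => (Lp.compMeasurePreserving π hmpπ k : X → ℂ) (T g x) :=
      (aeeq_comp (hTμ g) (Lp.coeFn_compMeasurePreserving k hmpπ)).symm
    have h5 := Lp.coeFn_compMeasurePreserving
      (Lp.compMeasurePreserving π hmpπ k) (hTμ g)
    exact (h1.trans ((h2.trans h3).trans h4)).trans h5.symm
  have hadj : ∀ (g : G) (u : Lp ℂ 2 μX),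
      Φt (Lp.compMeasurePreserving (T g) (hTμ g) u)
        = Lp.compMeasurePreserving (S g) (hSμ g) (Φt u) := by
    intro g u
    refine ext_inner_right ℂ fun k => ?_
    rw [hΦtdef, ContinuousLinearMap.adjoint_inner_left]
    calc (inner ℂ (Lp.compMeasurePreserving (T g) (hTμ g) u) (Φ k) : ℂ)
        = inner ℂ (Lp.compMeasurePreserving (T g) (hTμ g) u)
            (Lp.compMeasurePreserving (T g) (hTμ g)
              (Lp.compMeasurePreserving (T g⁻¹) (hTμ g⁻¹) (Φ k))) := by rw [hinv]
      _ = inner ℂ u (Lp.compMeasurePreserving (T g⁻¹) (hTμ g⁻¹) (Φ k)) := hinner g _ _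
      _ = inner ℂ u (Φ (Lp.compMeasurePreserving (S g⁻¹) (hSμ g⁻¹) k)) := by rw [hΦV]
      _ = inner ℂ (Φt u) (Lp.compMeasurePreserving (S g⁻¹) (hSμ g⁻¹) k) := by
          rw [hΦtdef, ContinuousLinearMap.adjoint_inner_left]
      _ = inner ℂ (Lp.compMeasurePreserving (S g) (hSμ g) (Φt u))
            (Lp.compMeasurePreserving (S g) (hSμ g)
              (Lp.compMeasurePreserving (S g⁻¹) (hSμ g⁻¹) k)) := (hinnerS g _ _).symm
      _ = inner ℂ (Lp.compMeasurePreserving (S g) (hSμ g) (Φt u)) k := by rw [hinvS]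
  have hQ1 : ∀ f : Lp ℂ 2 μX, AlmostPeriodic T μX f →
      AlmostPeriodic S μY (conjLp (Φt (conjLp f))) := by
    intro f hf
    have hQcomm : ∀ g : G,
        Lp.compMeasurePreserving (S g) (hSμ g) (conjLp (Φt (conjLp f)))
          = conjLp (Φt (conjLp (Lp.compMeasurePreserving (T g) (hTμ g) f))) := by
      intro g
      rw [conjLp_comp (T g) (hTμ g) f, hadj g (conjLp f),
        ← conjLp_comp (S g) (hSμ g) (Φt (conjLp f))]
    rw [almostPeriodic_iff T μX hTμ] at hf
    rw [almostPeriodic_iff S μY hSμ]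
    exact isCompact_closure_range_of_comm
      (Q := fun u : Lp ℂ 2 μX => conjLp (Φt (conjLp u)))
      (continuous_conjLp.comp (Φt.continuous.comp continuous_conjLp))
      (fun g => hQcomm g) hf
  have hQ2 : ∀ (f : Lp ℂ 2 μX) (H : Lp ℂ 2 μY),
      ∫ x, (f : X → ℂ) x * (H : Y → ℂ) (π x) ∂μX
        = ∫ y, (conjLp (Φt (conjLp f)) : Y → ℂ) y * (H : Y → ℂ) y ∂μY := by
    intro f H
    have e1 : ∫ x, (f : X → ℂ) x * (H : Y → ℂ) (π x) ∂μX
        = (inner ℂ (conjLp f) (Φ H) : ℂ) := by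
      rw [L2.inner_def]
      refine integral_congr_ae ?_
      have hΦH := Lp.coeFn_compMeasurePreserving H hmpπ
      rw [← hΦapp] at hΦH
      filter_upwards [coeFn_conjLp f, hΦH] with x h1 h2
      rw [RCLike.inner_apply, h1, h2]
      simp
      ring
    have e2 : (inner ℂ (conjLp f) (Φ H) : ℂ) = inner ℂ (Φt (conjLp f)) H := by
      rw [hΦtdef, ContinuousLinearMap.adjoint_inner_left]
    have e3 : (inner ℂ (Φt (conjLp f)) H : ℂ)
        = ∫ y, (conjLp (Φt (conjLp f)) : Y → ℂ) y * (H : Y → ℂ) y ∂μY := by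
      rw [L2.inner_def]
      refine integral_congr_ae ?_
      filter_upwards [coeFn_conjLp (Φt (conjLp f))] with y h1
      rw [RCLike.inner_apply, h1]
      ring
    exact e1.trans (e2.trans e3)
  exact ⟨fun u => conjLp (Φt (conjLp u)), hQ1, hQ2⟩

end QDAux

end QDAuxSection

open ProbabilityTheory in
/-- Quasi-disjointness passes to factors: if `Y` is a factor of `X` and `X` is
quasi-disjoint from `Z`, then `Y` is quasi-disjoint from `Z`. -/
theorem quasi_disjointness_passes_to_factors
    {G : Type*} [Group G] [Countable G]
    {X : Type*} [MetricSpace X] [CompactSpace X] [MeasurableSpace X] [BorelSpace X]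
    {Y : Type*} [MetricSpace Y] [CompactSpace Y] [MeasurableSpace Y] [BorelSpace Y]
    {Z : Type*} [MetricSpace Z] [CompactSpace Z] [MeasurableSpace Z] [BorelSpace Z]
    (T : G → X → X) (hT1 : ∀ x, T 1 x = x)
    (hTmul : ∀ g h x, T (g * h) x = T g (T h x))
    (hTcont : ∀ g, Continuous (T g))
    (μX : Measure X) (hXprob : IsProbabilityMeasure μX)
    (hTμ : ∀ g, MeasurePreserving (T g) μX μX)
    (S : G → Y → Y) (hS1 : ∀ y, S 1 y = y)
    (hSmul : ∀ g h y, S (g * h) y = S g (S h y))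
    (hScont : ∀ g, Continuous (S g))
    (μY : Measure Y) (hYprob : IsProbabilityMeasure μY)
    (hSμ : ∀ g, MeasurePreserving (S g) μY μY)
    (R : G → Z → Z) (hR1 : ∀ z, R 1 z = z)
    (hRmul : ∀ g h z, R (g * h) z = R g (R h z))
    (hRcont : ∀ g, Continuous (R g))
    (μZ : Measure Z) (hZprob : IsProbabilityMeasure μZ)
    (hRμ : ∀ g, MeasurePreserving (R g) μZ μZ)
    (π : X → Y) (hπ : IsFactorMap T S μX μY π)
    (hXZ : QuasiDisjoint T R μX μZ) :
    QuasiDisjoint S R μY μZ := by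
  classical
  obtain ⟨hπm, hπmap, hπeq⟩ := hπ
  have hmpπ : MeasurePreserving π μX μY := ⟨hπm, hπmap⟩
  haveI := hXprob; haveI := hYprob; haveI := hZprob
  have hTm : ∀ g : G, Measurable (T g) := fun g => (hTcont g).measurable
  have hSm : ∀ g : G, Measurable (S g) := fun g => (hScont g).measurable
  have hRm : ∀ g : G, Measurable (R g) := fun g => (hRcont g).measurable
  have hRinv : ∀ (g : G) (z : Z), R g (R g⁻¹ z) = z := by
    intro g z
    have h1 : g * g⁻¹ = 1 := by group
    rw [← hRmul, h1, hR1]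
  have hSinv : ∀ (g : G) (y : Y), S g⁻¹ (S g y) = y := by
    intro g y
    have h1 : g⁻¹ * g = 1 := by group
    rw [← hSmul, h1, hS1]
  haveI : Nonempty Z := by
    by_contra hne
    rw [not_nonempty_iff] at hne
    have h0 : μZ Set.univ = 0 := by
      rw [Set.univ_eq_empty_iff.2 hne]
      exact measure_empty
    rw [measure_univ] at h0
    exact one_ne_zero h0
  intro ν hν hνK
  obtain ⟨hνprob, hνinv, hνfst, hνsnd⟩ := hν
  haveI := hνprob
  have hνfst' : ν.fst = μY := hνfst
  set κ := ν.condKernel with hκdef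
  have hdis : μY ⊗ₘ κ = ν := by
    rw [← hνfst']
    exact ν.disintegrate κ
  -- almost-everywhere equivariance of the disintegration kernel
  have hκae : ∀ g : G, ∀ᵐ y ∂μY, κ y = Measure.map (R g⁻¹) (κ (S g y)) := by
    intro g
    haveI hmk1 := ProbabilityTheory.Kernel.IsMarkovKernel.comap κ (hSm g)
    haveI hmk2 := ProbabilityTheory.Kernel.IsMarkovKernel.map
      (κ.comap (S g) (hSm g)) (hRm g⁻¹)
    have hcomp : ν = ν.fst ⊗ₘ ProbabilityTheory.Kernel.map
        (κ.comap (S g) (hSm g)) (R g⁻¹) := by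
      rw [hνfst']
      refine QDAux.measure_prod_ext fun A B hA hB => ?_
      have e2 : ∀ y, ProbabilityTheory.Kernel.map (κ.comap (S g) (hSm g)) (R g⁻¹) y B
          = κ (S g y) (R g⁻¹ ⁻¹' B) := by
        intro y
        rw [ProbabilityTheory.Kernel.map_apply' _ (hRm g⁻¹) _ hB,
          ProbabilityTheory.Kernel.comap_apply]
      have hB' : MeasurableSet (R g⁻¹ ⁻¹' B) := (hRm g⁻¹) hB
      calc ν (A ×ˢ B)
          = ν ((fun p : Y × Z => (S g⁻¹ p.1, R g⁻¹ p.2)) ⁻¹' (A ×ˢ B)) :=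
            ((hνinv g⁻¹).measure_preimage (hA.prod hB).nullMeasurableSet).symm
        _ = ν ((S g⁻¹ ⁻¹' A) ×ˢ (R g⁻¹ ⁻¹' B)) := rfl
        _ = ∫⁻ y in S g⁻¹ ⁻¹' A, κ y (R g⁻¹ ⁻¹' B) ∂μY := by
            rw [← hdis, Measure.compProd_apply_prod ((hSm g⁻¹) hA) hB']
        _ = ∫⁻ y, (S g⁻¹ ⁻¹' A).indicator (fun y => κ y (R g⁻¹ ⁻¹' B)) y ∂μY := by
            rw [lintegral_indicator ((hSm g⁻¹) hA)]
        _ = ∫⁻ y, (S g⁻¹ ⁻¹' A).indicator (fun y => κ y (R g⁻¹ ⁻¹' B)) (S g y) ∂μY :=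
            ((hSμ g).lintegral_comp
              (((ProbabilityTheory.Kernel.measurable_coe κ hB').indicator
                ((hSm g⁻¹) hA)))).symm
        _ = ∫⁻ y, A.indicator (fun y => κ (S g y) (R g⁻¹ ⁻¹' B)) y ∂μY := by
            refine lintegral_congr fun y => ?_
            by_cases hy : y ∈ A
            · rw [Set.indicator_of_mem hy,
                Set.indicator_of_mem (show S g y ∈ S g⁻¹ ⁻¹' A by
                  simp only [Set.mem_preimage, hSinv g y]; exact hy)]
            · rw [Set.indicator_of_notMem hy,
                Set.indicator_of_notMem (show S g y ∉ S g⁻¹ ⁻¹' A by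
                  simp only [Set.mem_preimage, hSinv g y]; exact hy)]
        _ = ∫⁻ y in A, κ (S g y) (R g⁻¹ ⁻¹' B) ∂μY := by
            rw [lintegral_indicator hA]
        _ = ∫⁻ y in A, ProbabilityTheory.Kernel.map
              (κ.comap (S g) (hSm g)) (R g⁻¹) y B ∂μY := by
            refine setLIntegral_congr_fun hA (fun y _ => ?_)
            rw [e2]
        _ = (μY ⊗ₘ ProbabilityTheory.Kernel.map (κ.comap (S g) (hSm g)) (R g⁻¹))
              (A ×ˢ B) := (Measure.compProd_apply_prod hA hB).symm
    have huniq := ProbabilityTheory.eq_condKernel_of_measure_eq_compProd _ hcomp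
    rw [hνfst'] at huniq
    filter_upwards [huniq] with y hy
    rw [← hy, ProbabilityTheory.Kernel.map_apply _ (hRm g⁻¹),
      ProbabilityTheory.Kernel.comap_apply]
  have hκB : ∀ g : G, ∀ᵐ x ∂μX, ∀ B : Set Z, MeasurableSet B →
      κ (π x) (R g ⁻¹' B) = κ (S g (π x)) B := by
    intro g
    refine QDAux.ae_comp hmpπ
      (p := fun y => ∀ B : Set Z, MeasurableSet B → κ y (R g ⁻¹' B) = κ (S g y) B) ?_
    filter_upwards [hκae g] with y hy B hB
    rw [hy, Measure.map_apply (hRm g⁻¹) ((hRm g) hB)]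
    congr 1
    ext z
    simp [hRinv g z]
  -- the relatively independent joining
  set η := κ.comap π hπm with hηdef
  haveI : ProbabilityTheory.IsMarkovKernel η :=
    ProbabilityTheory.Kernel.IsMarkovKernel.comap κ hπm
  set lam := μX ⊗ₘ η with hlamdef
  haveI : IsProbabilityMeasure lam := by rw [hlamdef]; infer_instance
  have hηapp : ∀ x, η x = κ (π x) := fun x => by
    rw [hηdef, ProbabilityTheory.Kernel.comap_apply]
  have hlam_rect : ∀ A B, MeasurableSet A → MeasurableSet B →
      lam ((π ⁻¹' A) ×ˢ B) = ν (A ×ˢ B) := by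
    intro A B hA hB
    rw [hlamdef, Measure.compProd_apply_prod (hπm hA) hB]
    calc ∫⁻ x in π ⁻¹' A, η x B ∂μX
        = ∫⁻ x in π ⁻¹' A, (fun y => κ y B) (π x) ∂μX := by
          refine setLIntegral_congr_fun (hπm hA) (fun x _ => ?_)
          rw [hηapp]
      _ = ∫⁻ y in A, κ y B ∂μY :=
          hmpπ.setLIntegral_comp_preimage hA (ProbabilityTheory.Kernel.measurable_coe κ hB)
      _ = ν (A ×ˢ B) := by rw [← hdis, Measure.compProd_apply_prod hA hB]
  have hlamfst : lam.map Prod.fst = μX := by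
    have := Measure.fst_compProd μX η
    rw [Measure.fst] at this
    exact this
  have hlamsnd : lam.map Prod.snd = μZ := by
    refine Measure.ext fun B hB => ?_
    rw [Measure.map_apply measurable_snd hB]
    have hpre : (Prod.snd ⁻¹' B : Set (X × Z)) = (π ⁻¹' Set.univ) ×ˢ B := by
      ext p; simp
    rw [hpre, hlam_rect Set.univ B MeasurableSet.univ hB, ← hνsnd,
      Measure.map_apply measurable_snd hB]
    congr 1
    ext p; simp
  -- lam is invariant
  have hlaminv : ∀ g : G, MeasurePreserving (fun p : X × Z => (T g p.1, R g p.2)) lam lam := by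
    intro g
    have hmeas : Measurable fun p : X × Z => (T g p.1, R g p.2) :=
      ((hTm g).comp measurable_fst).prodMk ((hRm g).comp measurable_snd)
    refine ⟨hmeas, ?_⟩
    refine QDAux.measure_prod_ext fun A B hA hB => ?_
    rw [Measure.map_apply hmeas (hA.prod hB)]
    have hpre : (fun p : X × Z => (T g p.1, R g p.2)) ⁻¹' (A ×ˢ B)
        = (T g ⁻¹' A) ×ˢ (R g ⁻¹' B) := rfl
    rw [hpre, hlamdef, Measure.compProd_apply_prod ((hTm g) hA) ((hRm g) hB),
      Measure.compProd_apply_prod hA hB]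
    have hWmeas : Measurable fun x => A.indicator (fun x' => κ (π x') B) x :=
      ((ProbabilityTheory.Kernel.measurable_coe κ hB).comp hπm).indicator hA
    calc ∫⁻ x in T g ⁻¹' A, η x (R g ⁻¹' B) ∂μX
        = ∫⁻ x, (T g ⁻¹' A).indicator (fun x => κ (π x) (R g ⁻¹' B)) x ∂μX := by
          rw [lintegral_indicator ((hTm g) hA)]
          refine setLIntegral_congr_fun ((hTm g) hA) (fun x _ => ?_)
          rw [hηapp]
      _ = ∫⁻ x, A.indicator (fun x' => κ (π x') B) (T g x) ∂μX := by
          refine lintegral_congr_ae ?_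
          filter_upwards [hκB g, hπeq g] with x h1 h2
          by_cases hx : T g x ∈ A
          · rw [Set.indicator_of_mem (show x ∈ T g ⁻¹' A from hx),
              Set.indicator_of_mem hx, h1 B hB, h2]
          · rw [Set.indicator_of_notMem (show x ∉ T g ⁻¹' A from hx),
              Set.indicator_of_notMem hx]
      _ = ∫⁻ x, A.indicator (fun x' => κ (π x') B) x ∂μX := (hTμ g).lintegral_comp hWmeas
      _ = ∫⁻ x in A, κ (π x) B ∂μX := by rw [lintegral_indicator hA]
      _ = ∫⁻ x in A, η x B ∂μX := by
          refine setLIntegral_congr_fun hA (fun x _ => ?_)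
          rw [hηapp]
  have hlamjoin : IsJoining T R μX μZ lam := ⟨inferInstance, hlaminv, hlamfst, hlamsnd⟩
  -- the conditional-expectation-like operator
  obtain ⟨Q, hQap, hQint⟩ := QDAux.exists_Q T hT1 hTmul hTμ S hS1 hSmul hSμ π hmpπ hπeq
  -- lam projects to the Kronecker product
  have hlamK : ProjectsToKroneckerProduct T R μX μZ lam := by
    intro f h hf hh
    have hHmem : MemLp (fun y => ∫ z, (h : Z → ℂ) z ∂κ y) 2 μY :=
      QDAux.memLp_kernel_integral κ h (by rw [hdis]; exact hνsnd)
    set HL := hHmem.toLp _ with hHLdef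
    have hfst_mp : MeasurePreserving (Prod.fst : X × Z → X) lam μX := ⟨measurable_fst, hlamfst⟩
    have hsnd_mp : MeasurePreserving (Prod.snd : X × Z → Z) lam μZ := ⟨measurable_snd, hlamsnd⟩
    have hνfst_mp : MeasurePreserving (Prod.fst : Y × Z → Y) ν μY := ⟨measurable_fst, hνfst⟩
    have hνsnd_mp : MeasurePreserving (Prod.snd : Y × Z → Z) ν μZ := ⟨measurable_snd, hνsnd⟩
    have hint1 : Integrable (fun p : X × Z => (f : X → ℂ) p.1 * (h : Z → ℂ) p.2) lam :=
      QDAux.integrable_mul ((Lp.memLp f).comp_measurePreserving hfst_mp)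
        ((Lp.memLp h).comp_measurePreserving hsnd_mp)
    have hint2 : Integrable (fun p : Y × Z => (Q f : Y → ℂ) p.1 * (h : Z → ℂ) p.2) ν :=
      QDAux.integrable_mul ((Lp.memLp (Q f)).comp_measurePreserving hνfst_mp)
        ((Lp.memLp h).comp_measurePreserving hνsnd_mp)
    have honeY : MemLp (fun _ : Y => (1 : ℂ)) 2 μY := memLp_const 1
    have hQone : ∫ y, (Q f : Y → ℂ) y ∂μY = ∫ x, (f : X → ℂ) x ∂μX := by
      have := hQint f (honeY.toLp _)
      have h1 : ∫ x, (f : X → ℂ) x * ((honeY.toLp _ : Lp ℂ 2 μY) : Y → ℂ) (π x) ∂μX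
          = ∫ x, (f : X → ℂ) x ∂μX := by
        refine integral_congr_ae ?_
        filter_upwards [QDAux.aeeq_comp hmpπ honeY.coeFn_toLp] with x hx
        rw [hx, mul_one]
      have h2 : ∫ y, (Q f : Y → ℂ) y * ((honeY.toLp _ : Lp ℂ 2 μY) : Y → ℂ) y ∂μY
          = ∫ y, (Q f : Y → ℂ) y ∂μY := by
        refine integral_congr_ae ?_
        filter_upwards [honeY.coeFn_toLp] with y hy
        rw [hy, mul_one]
      rw [h1, h2] at this
      exact this.symm
    calc ∫ p : X × Z, (f : X → ℂ) p.1 * (h : Z → ℂ) p.2 ∂lam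
        = ∫ x, ∫ z, (f : X → ℂ) x * (h : Z → ℂ) z ∂η x ∂μX := by
          rw [hlamdef] at hint1 ⊢
          exact Measure.integral_compProd hint1
      _ = ∫ x, (f : X → ℂ) x * ∫ z, (h : Z → ℂ) z ∂κ (π x) ∂μX := by
          simp only [hηapp]
          refine integral_congr_ae (ae_of_all _ fun x => ?_)
          exact integral_const_mul _ _
      _ = ∫ x, (f : X → ℂ) x * (HL : Y → ℂ) (π x) ∂μX := by
          refine integral_congr_ae ?_
          filter_upwards [QDAux.aeeq_comp hmpπ hHmem.coeFn_toLp] with x hx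
          rw [hx]
      _ = ∫ y, (Q f : Y → ℂ) y * (HL : Y → ℂ) y ∂μY := hQint f HL
      _ = ∫ y, (Q f : Y → ℂ) y * ∫ z, (h : Z → ℂ) z ∂κ y ∂μY := by
          refine integral_congr_ae ?_
          filter_upwards [hHmem.coeFn_toLp] with y hy
          rw [hy]
      _ = ∫ y, ∫ z, (Q f : Y → ℂ) y * (h : Z → ℂ) z ∂κ y ∂μY := by
          refine integral_congr_ae (ae_of_all _ fun y => ?_)
          exact (integral_const_mul _ _).symm
      _ = ∫ p : Y × Z, (Q f : Y → ℂ) p.1 * (h : Z → ℂ) p.2 ∂ν := by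
          rw [← hdis] at hint2
          rw [← hdis]
          exact (Measure.integral_compProd hint2).symm
      _ = (∫ y, (Q f : Y → ℂ) y ∂μY) * ∫ z, (h : Z → ℂ) z ∂μZ :=
          hνK (Q f) h (hQap f hf) hh
      _ = (∫ x, (f : X → ℂ) x ∂μX) * ∫ z, (h : Z → ℂ) z ∂μZ := by rw [hQone]
  -- conclude
  have hlam_eq : lam = μX.prod μZ := hXZ lam hlamjoin hlamK
  refine QDAux.measure_prod_ext fun A B hA hB => ?_
  rw [← hlam_rect A B hA hB, hlam_eq, Measure.prod_prod, Measure.prod_prod,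
    ← hπmap, Measure.map_apply hπm hA]
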